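/- Let G be a group and H a normal subgroup of G of finite index, and let φ be a finite-dimensional complex representation of G whose restriction to H is irreducible. Then for any irreducible finite-dimensional complex representation ρ of the quotient group G/H, the tensor product ρ ⊗ φ (where ρ is inflated to a representation of G via the quotient map G → G/H) is an irreducible representation of G. -/

import Mathlib

open scoped TensorProduct

/-- A submodule `p` is a subrepresentation of `ρ` if it is stable under the action. -/
def IsSubrep {k G V : Type*} [CommSemiring k] [Monoid G] [AddCommMonoid V] [Module k V]
    (ρ : Representation k G V) (p : Submodule k V) : Prop :=
  ∀ g : G, ∀ v ∈ p, ρ g v ∈ p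

/-- A representation is irreducible if it is nonzero and has no proper nonzero
subrepresentations. -/
def IsIrreducibleRep {k G V : Type*} [CommSemiring k] [Monoid G] [AddCommMonoid V] [Module k V]
    (ρ : Representation k G V) : Prop :=
  Nontrivial V ∧ ∀ p : Submodule k V, IsSubrep ρ p → p = ⊥ ∨ p = ⊤

/-- Two representations are isomorphic if there is an equivariant linear equivalence. -/
def RepIso {k G V W : Type*} [CommSemiring k] [Monoid G] [AddCommMonoid V] [Module k V]
    [AddCommMonoid W] [Module k W]
    (ρ : Representation k G V) (σ : Representation k G W) : Prop :=
  ∃ e : V ≃ₗ[k] W, ∀ (g : G) (v : V), e (ρ g v) = σ g (e v)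

section DensityHelpers

noncomputable def repSpan {G V : Type*} [Group G] [AddCommGroup V] [Module ℂ V]
    (H : Subgroup G) (φ : Representation ℂ G V) : Submodule ℂ (V →ₗ[ℂ] V) :=
  Submodule.span ℂ (Set.range fun h : H => (φ (h : G) : V →ₗ[ℂ] V))

variable {G V : Type*} [Group G] [AddCommGroup V] [Module ℂ V]
    {H : Subgroup G} {φ : Representation ℂ G V}

lemma repSpan_id_mem : LinearMap.id ∈ repSpan H φ := by
  apply Submodule.subset_span
  exact ⟨1, by simp; rfl⟩

lemma repSpan_comp_mem (h : H) {T : V →ₗ[ℂ] V} (hT : T ∈ repSpan H φ) :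
    φ (h : G) ∘ₗ T ∈ repSpan H φ := by
  induction hT using Submodule.span_induction with
  | mem T hmem =>
    obtain ⟨h', rfl⟩ := hmem
    apply Submodule.subset_span
    exact ⟨h * h', by show φ ↑(h * h') = _; rw [Subgroup.coe_mul, map_mul]; rfl⟩
  | zero => simpa using Submodule.zero_mem _
  | add T T' _ _ ihT ihT' => rw [LinearMap.comp_add]; exact Submodule.add_mem _ ihT ihT'
  | smul a T _ ih => rw [LinearMap.comp_smul]; exact Submodule.smul_mem _ a ih

lemma schur_aux [FiniteDimensional ℂ V] (hφ : IsIrreducibleRep (φ.comp H.subtype))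
    (T : V →ₗ[ℂ] V) (hT : ∀ (h : H) (v : V), T (φ (h : G) v) = φ (h : G) (T v)) :
    ∃ c : ℂ, ∀ v, T v = c • v := by
  haveI : Nontrivial V := hφ.1
  obtain ⟨c, hc⟩ := Module.End.exists_eigenvalue (T : Module.End ℂ V)
  refine ⟨c, ?_⟩
  have hsub : IsSubrep (φ.comp H.subtype) (Module.End.eigenspace T c) := by
    intro h v hv
    rw [Module.End.mem_eigenspace_iff] at hv ⊢
    show T (φ (h : G) v) = c • φ (h : G) v
    rw [hT h v, hv, map_smul]
  rcases hφ.2 _ hsub with h | h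
  · exact absurd h (Module.End.hasEigenvalue_iff.mp hc)
  · intro v
    have : v ∈ Module.End.eigenspace T c := h ▸ Submodule.mem_top
    exact Module.End.mem_eigenspace_iff.mp this

lemma density_aux [FiniteDimensional ℂ V] (hφ : IsIrreducibleRep (φ.comp H.subtype))
    {ι : Type*} (c : ι → V) (hc : LinearIndependent ℂ c)
    (s : Finset ι) (w : ι → V) :
    ∃ T ∈ repSpan H φ, ∀ j ∈ s, T (c j) = w j := by
  classical
  induction s using Finset.induction_on generalizing w with
  | empty => exact ⟨0, Submodule.zero_mem _, fun j hj => absurd hj (by simp)⟩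
  | @insert a s ha ih =>
    -- the submodule of operators in the span killing all `c j`, `j ∈ s`
    set Bs : Submodule ℂ (V →ₗ[ℂ] V) :=
      repSpan H φ ⊓ (⨅ j ∈ s, LinearMap.ker (LinearMap.applyₗ (c j))) with hBs
    have memBs : ∀ T : V →ₗ[ℂ] V, T ∈ Bs ↔ T ∈ repSpan H φ ∧ ∀ j ∈ s, T (c j) = 0 := by
      intro T
      simp [hBs, Submodule.mem_iInf]
    set N : Submodule ℂ V := Submodule.map (LinearMap.applyₗ (c a)) Bs with hN
    have hsubN : IsSubrep (φ.comp H.subtype) N := by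
      rintro h v ⟨T, hT, rfl⟩
      refine ⟨φ (h : G) ∘ₗ T, ?_, rfl⟩
      rw [SetLike.mem_coe, memBs] at hT
      rw [SetLike.mem_coe, memBs]
      exact ⟨repSpan_comp_mem h hT.1, fun j hj => by simp [hT.2 j hj]⟩
    rcases hφ.2 _ hsubN with hbot | htop
    · -- N = ⊥ : contradiction using Schur
      exfalso
      set A := repSpan H φ with hA
      let p : A →ₗ[ℂ] (↥s → V) :=
        { toFun := fun T => fun j => T.1 (c j.1),
          map_add' := fun T T' => by funext j; rfl,
          map_smul' := fun a T => by funext j; rfl }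
      let q : A →ₗ[ℂ] V :=
        { toFun := fun T => T.1 (c a),
          map_add' := fun T T' => rfl,
          map_smul' := fun a T => rfl }
      have hker : LinearMap.ker p ≤ LinearMap.ker q := by
        intro T hT
        rw [LinearMap.mem_ker] at hT ⊢
        have hTB : T.1 ∈ Bs := by
          rw [memBs]
          exact ⟨T.2, fun j hj => congrFun hT ⟨j, hj⟩⟩
        have : T.1 (c a) ∈ N := ⟨T.1, hTB, rfl⟩
        rw [hbot, Submodule.mem_bot] at this
        exact this
      have hsurj : Function.Surjective p := by
        intro y
        obtain ⟨T, hTA, hT⟩ := ih (fun j => if h : j ∈ s then y ⟨j, h⟩ else 0)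
        exact ⟨⟨T, hTA⟩, funext fun j => by show T (c j.1) = y j; simpa [j.2] using hT j.1 j.2⟩
      obtain ⟨g, hg⟩ := p.exists_rightInverse_of_surjective (LinearMap.range_eq_top.2 hsurj)
      set f : (↥s → V) →ₗ[ℂ] V := q ∘ₗ g with hf
      have hfp : ∀ T : A, f (p T) = q T := by
        intro T
        have h1 : g (p T) - T ∈ LinearMap.ker p := by
          rw [LinearMap.mem_ker, map_sub, sub_eq_zero]
          simpa using LinearMap.ext_iff.mp hg (p T)
        have h2 := hker h1
        rw [LinearMap.mem_ker, map_sub, sub_eq_zero] at h2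
        show q (g (p T)) = q T
        exact h2
      have hcomm : ∀ (h : H) (y : ↥s → V), f (fun j => φ (h : G) (y j)) = φ (h : G) (f y) := by
        intro h y
        obtain ⟨T, rfl⟩ := hsurj y
        have h1 : (fun j => φ (h : G) (p T j)) = p ⟨φ (h : G) ∘ₗ T.1, repSpan_comp_mem h T.2⟩ := rfl
        rw [h1, hfp, hfp]
        rfl
      -- components of f, each commutes with the H action, so is scalar by Schur
      have hcj : ∀ j : ↥s, ∃ cj : ℂ, ∀ v : V, f (Pi.single j v) = cj • v := by
        intro j
        have := schur_aux hφ (f ∘ₗ LinearMap.single ℂ (fun _ : ↥s => V) j) ?_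
        · obtain ⟨cj, hcj⟩ := this
          exact ⟨cj, fun v => hcj v⟩
        · intro h v
          show f (Pi.single j (φ (h : G) v)) = φ (h : G) (f (Pi.single j v))
          rw [← hcomm h (Pi.single j v)]
          congr 1
          funext i
          by_cases hij : i = j
          · subst hij; simp
          · simp [Pi.single_eq_of_ne hij]
      choose co hco using hcj
      -- now compute c a = f (fun j => c j) = ∑ co j • c j
      have key : c a = ∑ j : ↥s, co j • c (j : ι) := by
        have h1 : c a = q ⟨LinearMap.id, repSpan_id_mem⟩ := rfl
        have h2 : p ⟨LinearMap.id, repSpan_id_mem⟩ = fun j : ↥s => c (j : ι) := rfl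
        rw [h1, ← hfp, h2]
        rw [show (fun j : ↥s => c (j : ι)) = ∑ j : ↥s, Pi.single j (c (j : ι)) from
          (Finset.univ_sum_single _).symm]
        rw [map_sum]
        exact Finset.sum_congr rfl fun j _ => hco j (c (j : ι))
      have hmem : c a ∈ Submodule.span ℂ (c '' ↑s) := by
        rw [key]
        exact Submodule.sum_mem _ fun j _ =>
          Submodule.smul_mem _ _ (Submodule.subset_span ⟨j.1, j.2, rfl⟩)
      exact hc.notMem_span_image ha hmem
    · -- N = ⊤ : extend
      obtain ⟨T₀, hT₀A, hT₀⟩ := ih w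
      have : w a - T₀ (c a) ∈ N := htop ▸ Submodule.mem_top
      obtain ⟨T₁, hT₁B, hT₁⟩ := this
      rw [SetLike.mem_coe, memBs] at hT₁B
      refine ⟨T₀ + T₁, Submodule.add_mem _ hT₀A hT₁B.1, fun j hj => ?_⟩
      rcases Finset.mem_insert.1 hj with rfl | hj
      · show T₀ (c j) + T₁ (c j) = w j
        have : LinearMap.applyₗ (c j) T₁ = T₁ (c j) := rfl
        rw [show T₁ (c j) = w j - T₀ (c j) from hT₁]
        abel
      · show T₀ (c j) + T₁ (c j) = w j
        rw [hT₀ j hj, hT₁B.2 j hj, add_zero]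

end DensityHelpers

/-- If `H` is a normal subgroup of finite index of `G`, `φ` is a
finite-dimensional complex representation of `G` whose restriction to `H` is irreducible,
and `ρ` is an irreducible finite-dimensional complex representation of `G ⧸ H`, then the
tensor product `ρ ⊗ φ` (with `ρ` inflated to `G` via the quotient map) is irreducible. -/
theorem inflation_tensor_irreducible {G : Type*} [Group G] (H : Subgroup G)
    [H.Normal] [H.FiniteIndex]
    {V : Type*} [AddCommGroup V] [Module ℂ V] [FiniteDimensional ℂ V]
    (φ : Representation ℂ G V)
    (hφ : IsIrreducibleRep (φ.comp H.subtype))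
    {U : Type*} [AddCommGroup U] [Module ℂ U] [FiniteDimensional ℂ U]
    (ρ : Representation ℂ (G ⧸ H) U)
    (hρ : IsIrreducibleRep ρ) :
    IsIrreducibleRep (Representation.tprod (ρ.comp (QuotientGroup.mk' H)) φ) := by
  classical
  haveI hUn : Nontrivial U := hρ.1
  haveI hVn : Nontrivial V := hφ.1
  set σ := Representation.tprod (ρ.comp (QuotientGroup.mk' H)) φ with hσ
  constructor
  · -- Nontrivial (U ⊗ V)
    have h1 : 0 < Module.finrank ℂ U := Module.finrank_pos
    have h2 : 0 < Module.finrank ℂ V := Module.finrank_pos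
    have h3 : 0 < Module.finrank ℂ (U ⊗[ℂ] V) := by
      rw [Module.finrank_tensorProduct]; positivity
    exact Module.nontrivial_of_finrank_pos h3
  · intro W hW
    -- W is stable under `lTensor U T` for any `T` in the span of the `φ h`
    have hWH : ∀ T ∈ repSpan H φ, ∀ x ∈ W, LinearMap.lTensor U T x ∈ W := by
      intro T hT
      induction hT using Submodule.span_induction with
      | mem T hmem =>
        obtain ⟨h, rfl⟩ := hmem
        intro x hx
        have key : LinearMap.lTensor U (φ (h : G)) = σ (h : G) := by
          show TensorProduct.map LinearMap.id (φ (h : G)) = TensorProduct.map _ (φ (h : G))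
          congr 1
          have h1 : QuotientGroup.mk' H (h : G) = 1 := (QuotientGroup.eq_one_iff _).2 h.2
          show LinearMap.id = ρ (QuotientGroup.mk' H (h : G))
          rw [h1, map_one]
          rfl
        rw [show (fun h : H => φ (h : G)) h = φ (h : G) from rfl, key]
        exact hW _ x hx
      | zero => intro x hx; rw [LinearMap.lTensor_zero]; exact W.zero_mem
      | add T T' _ _ ihT ihT' =>
        intro x hx
        rw [LinearMap.lTensor_add]
        exact W.add_mem (ihT x hx) (ihT' x hx)
      | smul a T _ ih =>
        intro x hx
        rw [LinearMap.lTensor_smul]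
        exact W.smul_mem a (ih x hx)
    -- the subspace of `u` all of whose pure tensors lie in `W`
    set U' : Submodule ℂ U :=
      { carrier := {u | ∀ v : V, u ⊗ₜ[ℂ] v ∈ W},
        add_mem' := fun hu hu' v => by
          rw [TensorProduct.add_tmul]; exact W.add_mem (hu v) (hu' v),
        zero_mem' := fun v => by rw [TensorProduct.zero_tmul]; exact W.zero_mem,
        smul_mem' := fun a u hu v => by
          have := W.smul_mem a (hu v)
          rwa [TensorProduct.smul_tmul'] at this } with hU'def
    have hU'mem : ∀ u : U, u ∈ U' ↔ ∀ v : V, u ⊗ₜ[ℂ] v ∈ W := fun u => Iff.rfl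
    have hU'sub : IsSubrep ρ U' := by
      intro g u hu
      induction g using QuotientGroup.induction_on with
      | H g₀ =>
        rw [hU'mem] at hu ⊢
        intro v
        have h1 : u ⊗ₜ[ℂ] (φ g₀⁻¹ v) ∈ W := hu _
        have h2 := hW g₀ _ h1
        have h3 : σ g₀ (u ⊗ₜ[ℂ] (φ g₀⁻¹ v)) = (ρ (QuotientGroup.mk g₀) u) ⊗ₜ[ℂ] v := by
          show TensorProduct.map _ _ _ = _
          rw [TensorProduct.map_tmul]
          congr 1
          rw [← Module.End.mul_apply, ← map_mul, mul_inv_cancel, map_one, Module.End.one_apply]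
        rw [h3] at h2
        exact h2
    rcases hρ.2 _ hU'sub with hbot | htop
    · -- U' = ⊥ implies W = ⊥
      left
      rw [eq_bot_iff]
      intro w hw
      rw [Submodule.mem_bot]
      by_contra hw0
      set b := Module.Free.chooseBasis ℂ V with hb
      set e := TensorProduct.equivFinsuppOfBasisRight (M := U) b with he
      have hew : e w ≠ 0 := fun h => hw0 (by
        have := congrArg e.symm h
        simpa using this)
      obtain ⟨j₀, hj₀⟩ := Finsupp.support_nonempty_iff.2 hew
      have hmem : e w j₀ ∈ U' := by
        rw [hU'mem]
        intro v
        obtain ⟨T, hTA, hT⟩ := density_aux hφ b b.linearIndependent (e w).support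
          (fun j => if j = j₀ then v else 0)
        have hcalc : LinearMap.lTensor U T w = (e w j₀) ⊗ₜ[ℂ] v := by
          conv_lhs => rw [← e.symm_apply_apply w,
            TensorProduct.equivFinsuppOfBasisRight_symm_apply]
          rw [Finsupp.sum, map_sum]
          have : ∀ j ∈ (e w).support,
              LinearMap.lTensor U T ((e w j) ⊗ₜ[ℂ] b j) =
                (e w j) ⊗ₜ[ℂ] (if j = j₀ then v else 0) := by
            intro j hj
            rw [LinearMap.lTensor_tmul, hT j hj]
          rw [Finset.sum_congr rfl this]
          rw [Finset.sum_eq_single j₀]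
          · rw [if_pos rfl]
          · intro i _ hi
            rw [if_neg hi, TensorProduct.tmul_zero]
          · intro h
            exact absurd hj₀ h
        have := hWH T hTA w hw
        rwa [hcalc] at this
      rw [hbot, Submodule.mem_bot] at hmem
      exact Finsupp.mem_support_iff.1 hj₀ hmem
    · -- U' = ⊤ implies W = ⊤
      right
      rw [eq_top_iff, ← TensorProduct.span_tmul_eq_top ℂ U V, Submodule.span_le]
      rintro x ⟨u, v, rfl⟩
      have hu : u ∈ U' := htop ▸ Submodule.mem_top
      exact (hU'mem u).1 hu v
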